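/- Let F be a finite field and G a finite abelian group, and let u, v ∈ FG satisfy FG·u = Ann(v) and FG·v = Ann(u). Then FG·u^{(-1)} = FG·u if and only if FG·v^{(-1)} = FG·v, where w^{(-1)} = Σ_g w_{g^{-1}} g. -/

import Mathlib

/-- The annihilator of a single element of the group algebra. -/
def ann {F G : Type*} [Field F] [CommGroup G] (v : MonoidAlgebra F G) :
    Ideal (MonoidAlgebra F G) where
  carrier := {x | x * v = 0}
  add_mem' := by
    intro a b ha hb
    simp only [Set.mem_setOf_eq, add_mul] at *
    rw [ha, hb, add_zero]
  zero_mem' := by simp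
  smul_mem' := by
    intro c x hx
    simp only [Set.mem_setOf_eq, smul_eq_mul] at *
    rw [mul_assoc, hx, mul_zero]

/-- `w^{(-1)} = Σ_g w_{g⁻¹} g`. -/
def inv' {F G : Type*} [Field F] [CommGroup G] (v : MonoidAlgebra F G) :
    MonoidAlgebra F G :=
  MonoidAlgebra.ofCoeff (Finsupp.equivMapDomain (Equiv.inv G) v.coeff)

section Aux
variable {F G : Type*} [Field F] [CommGroup G]

/-- The inversion map as an algebra equivalence. -/
noncomputable def sig : MonoidAlgebra F G ≃ₐ[F] MonoidAlgebra F G :=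
  MonoidAlgebra.domCongr F F (MulEquiv.inv G)

lemma inv'_eq_sig (w : MonoidAlgebra F G) : inv' w = sig w := by
  ext g
  simp [sig, inv', Finsupp.equivMapDomain_apply]

lemma sig_sig (w : MonoidAlgebra F G) : sig (sig w) = w := by
  ext g; simp [sig]

lemma mem_ann {x w : MonoidAlgebra F G} : x ∈ ann w ↔ x * w = 0 := Iff.rfl

lemma ann_congr {a b : MonoidAlgebra F G}
    (h : (Ideal.span {a} : Ideal (MonoidAlgebra F G)) = Ideal.span {b}) :
    ann a = ann b := by
  have hab : a ∣ b := by
    rw [← Ideal.mem_span_singleton, h]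
    exact Ideal.mem_span_singleton_self b
  have hba : b ∣ a := by
    rw [← Ideal.mem_span_singleton, ← h]
    exact Ideal.mem_span_singleton_self a
  ext x
  simp only [mem_ann]
  constructor
  · intro hx
    obtain ⟨c, rfl⟩ := hab
    rw [← mul_assoc, hx, zero_mul]
  · intro hx
    obtain ⟨c, rfl⟩ := hba
    rw [← mul_assoc, hx, zero_mul]

lemma key {u v : MonoidAlgebra F G}
    (hu : (Ideal.span {u} : Ideal (MonoidAlgebra F G)) = ann v)
    (hv : (Ideal.span {v} : Ideal (MonoidAlgebra F G)) = ann u)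
    (h : (Ideal.span {inv' u} : Ideal (MonoidAlgebra F G)) = Ideal.span {u}) :
    (Ideal.span {inv' v} : Ideal (MonoidAlgebra F G)) = Ideal.span {v} := by
  rw [inv'_eq_sig] at h ⊢
  apply le_antisymm
  · rw [Ideal.span_le, Set.singleton_subset_iff, SetLike.mem_coe, hv, mem_ann]
    have hsu : sig u * v = 0 := by
      have : (sig u : MonoidAlgebra F G) ∈ Ideal.span {sig u} :=
        Ideal.mem_span_singleton_self _
      rw [h, hu, mem_ann] at this
      exact this
    have : sig (sig u * v) = 0 := by rw [hsu]; simp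
    rw [map_mul, sig_sig] at this
    rw [mul_comm]
    exact this
  · intro x hx
    rw [hv, mem_ann] at hx
    have : sig x * sig u = 0 := by rw [← map_mul, hx]; simp
    have hx2 : sig x ∈ ann (sig u) := mem_ann.mpr this
    rw [ann_congr h, ← hv, Ideal.mem_span_singleton] at hx2
    obtain ⟨c, hc⟩ := hx2
    rw [Ideal.mem_span_singleton]
    refine ⟨sig c, ?_⟩
    have := congrArg sig hc
    rw [sig_sig, map_mul] at this
    exact this

end Aux

theorem stmt_11 (F G : Type*) [Field F] [Fintype F] [CommGroup G] [Fintype G]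
    (u v : MonoidAlgebra F G)
    (hu : (Ideal.span {u} : Ideal (MonoidAlgebra F G)) = ann v)
    (hv : (Ideal.span {v} : Ideal (MonoidAlgebra F G)) = ann u) :
    (Ideal.span {inv' u} : Ideal (MonoidAlgebra F G)) = Ideal.span {u} ↔
      (Ideal.span {inv' v} : Ideal (MonoidAlgebra F G)) = Ideal.span {v} := by
  exact ⟨key hu hv, key hv hu⟩
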